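/- Let (Y, τ₁', τ₂') be a subspace of a bitopological space (X, τ₁, τ₂). If Y is τᵢ-closed in X and (Y, τ₁', τ₂') is p-strongly normal in X, then (Y, τ₁', τ₂') is (i,j)-WS-supernormal in X (where {i,j} = {1,2}). -/

import Mathlib

/-- `Y` is (i,j)-WS-supernormal in `X`: disjoint sets `A` closed in `(Y, τᵢ')` and
`B` closed in `(X, τⱼ)` are separated by disjoint `U` open in `(Y, τⱼ')` and
`V` open in `(X, τᵢ)`. -/
def WSSupernormalIn {X : Type*} (ti tj : TopologicalSpace X) (Y : Set X) : Prop :=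
  ∀ A B : Set X, A ⊆ Y →
    @IsClosed _ (TopologicalSpace.induced (Subtype.val : Y → X) ti)
      ((Subtype.val : Y → X) ⁻¹' A) →
    @IsClosed X tj B → A ∩ B = ∅ →
    ∃ U V : Set X, U ⊆ Y ∧
      @IsOpen _ (TopologicalSpace.induced (Subtype.val : Y → X) tj)
        ((Subtype.val : Y → X) ⁻¹' U) ∧
      @IsOpen X ti V ∧ A ⊆ U ∧ B ⊆ V ∧ U ∩ V = ∅

/-- `Y` is p-strongly normal in `X`: disjoint sets `A` closed in `(Y, τᵢ')` and
`B` closed in `(Y, τⱼ')` are separated by disjoint `U ∈ τⱼ` and `V ∈ τᵢ`. -/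
def PStronglyNormalIn {X : Type*} (ti tj : TopologicalSpace X) (Y : Set X) : Prop :=
  ∀ A B : Set X, A ⊆ Y → B ⊆ Y →
    @IsClosed _ (TopologicalSpace.induced (Subtype.val : Y → X) ti)
      ((Subtype.val : Y → X) ⁻¹' A) →
    @IsClosed _ (TopologicalSpace.induced (Subtype.val : Y → X) tj)
      ((Subtype.val : Y → X) ⁻¹' B) →
    A ∩ B = ∅ →
    ∃ U V : Set X, @IsOpen X tj U ∧ @IsOpen X ti V ∧ A ⊆ U ∧ B ⊆ V ∧ U ∩ V = ∅

theorem stmt5 {X : Type*} (ti tj : TopologicalSpace X) (Y : Set X)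
    (hY : @IsClosed X ti Y) (h : PStronglyNormalIn ti tj Y) :
    WSSupernormalIn ti tj Y := by
  intro A B hAY hA hB hAB
  have hBY : (Subtype.val : Y → X) ⁻¹' (B ∩ Y) = (Subtype.val : Y → X) ⁻¹' B := by
    ext x; simp [x.2]
  have hBcl : @IsClosed _ (TopologicalSpace.induced (Subtype.val : Y → X) tj)
      ((Subtype.val : Y → X) ⁻¹' (B ∩ Y)) := by
    rw [hBY]
    exact ⟨⟨Bᶜ, @IsClosed.isOpen_compl _ tj _ hB, rfl⟩⟩
  have hdisj : A ∩ (B ∩ Y) = ∅ := by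
    rw [Set.eq_empty_iff_forall_notMem] at hAB ⊢
    intro x hx; exact hAB x ⟨hx.1, hx.2.1⟩
  obtain ⟨U', V', hU'o, hV'o, hAU', hBV', hUV'⟩ :=
    h A (B ∩ Y) hAY Set.inter_subset_right hA hBcl hdisj
  refine ⟨U' ∩ Y, V' ∪ Yᶜ, Set.inter_subset_right, ?_, @IsOpen.union _ _ _ ti hV'o (@IsClosed.isOpen_compl _ ti _ hY), ?_, ?_, ?_⟩
  · have : (Subtype.val : Y → X) ⁻¹' (U' ∩ Y) = (Subtype.val : Y → X) ⁻¹' U' := by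
      ext x; simp [x.2]
    rw [this]
    exact ⟨U', hU'o, rfl⟩
  · exact Set.subset_inter hAU' hAY
  · intro b hb
    by_cases hbY : b ∈ Y
    · exact Or.inl (hBV' ⟨hb, hbY⟩)
    · exact Or.inr hbY
  · rw [Set.eq_empty_iff_forall_notMem] at hUV' ⊢
    rintro x ⟨⟨hxU, hxY⟩, hxV | hxYc⟩
    · exact hUV' x ⟨hxU, hxV⟩
    · exact hxYc hxY
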